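/- Let X_1, …, X_n be a random sample from a continuous distribution concentrated on [0,1], with order statistics X_{(1)} ≤ … ≤ X_{(n)}. For α > 1, the estimator ξ̂_α^w(X) = (1/(2(α−1))) Σ_{i=1}^{n−1} (X²_{(i+1)} − X²_{(i)}) [(1 − i/n) − (1 − i/n)^α] satisfies 0 ≤ ξ̂_α^w(X) ≤ 1/(2 α^{α/(α−1)}). -/

import Mathlib

open Finset

lemma key_max (α : ℝ) (hα : 1 < α) (t : ℝ) (ht0 : 0 ≤ t) :
    t - t ^ α ≤ (α - 1) / α ^ (α / (α - 1)) := by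
  have hα0 : (0:ℝ) < α := by linarith
  have hβ : Real.HolderConjugate α (α / (α - 1)) :=
    (Real.holderConjugate_iff_eq_conjExponent hα).2 rfl
  set β := α / (α - 1) with hβdef
  have hβpos : 0 < β := hβ.symm.pos
  have ha : (0:ℝ) ≤ t * α ^ (1/α) := by positivity
  have hb : (0:ℝ) ≤ α ^ (-(1/α)) := by positivity
  have hy := Real.young_inequality_of_nonneg ha hb hβ
  have h1 : t * α ^ (1/α) * α ^ (-(1/α)) = t := by
    rw [mul_assoc, ← Real.rpow_add hα0]
    simp
  have h2 : (t * α ^ (1/α)) ^ α = t ^ α * α := by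
    rw [Real.mul_rpow ht0 (by positivity), ← Real.rpow_mul hα0.le,
      one_div_mul_cancel hα0.ne', Real.rpow_one]
  have h3 : (α ^ (-(1/α))) ^ β / β = (α - 1) / α ^ β := by
    rw [← Real.rpow_mul hα0.le]
    have hs : α - 1 ≠ 0 := by linarith
    have hm : -(1/α) * β = -(1/(α-1)) := by
      rw [hβdef]; field_simp
    have hβeq : β = 1/(α-1) + 1 := by
      rw [hβdef]; field_simp
      ring
    rw [hm, Real.rpow_neg hα0.le, hβeq, Real.rpow_add hα0, Real.rpow_one]
    have hc : 0 < α ^ (1/(α-1)) := Real.rpow_pos_of_pos hα0 _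
    field_simp
    rw [add_sub_cancel, div_self hα0.ne']
  rw [h1, h2, h3] at hy
  have : t ^ α * α / α = t ^ α := by field_simp
  rw [this] at hy
  have hpow : (0:ℝ) < α ^ β := by positivity
  linarith

lemma g_nonneg (α : ℝ) (hα : 1 < α) (t : ℝ) (h0 : 0 ≤ t) (h1 : t ≤ 1) :
    0 ≤ t - t ^ α := by
  rcases eq_or_lt_of_le h0 with h | h
  · rw [← h, Real.zero_rpow (by linarith)]; simp
  · have := Real.rpow_le_rpow_of_exponent_ge h h1 hα.le
    rw [Real.rpow_one] at this; linarith

lemma telescope_sq (f : ℕ → ℝ) (n : ℕ) (hn : 1 ≤ n) :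
    ∑ i ∈ Finset.Icc 1 (n-1), (f (i+1) - f i) = f n - f 1 := by
  induction n with
  | zero => omega
  | succ m ih =>
    rcases Nat.lt_or_ge m 1 with hm | hm
    · interval_cases m; simp
    · have h1 : m + 1 - 1 = (m - 1) + 1 := by omega
      rw [h1, Finset.sum_Icc_succ_top (by omega), ih hm]
      have h2 : m - 1 + 1 = m := by omega
      rw [h2]; ring

theorem wcrte_estimator_bounds (n : ℕ) (α : ℝ) (hα : 1 < α) (X : ℕ → ℝ)
    (hX : ∀ i ∈ Finset.Icc 1 n, X i ∈ Set.Icc (0:ℝ) 1)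
    (hmono : ∀ i j, 1 ≤ i → i ≤ j → j ≤ n → X i ≤ X j) :
    0 ≤ (1/(2*(α-1))) * ∑ i ∈ Finset.Icc 1 (n-1),
          (((X (i+1)) ^ 2 - (X i) ^ 2)
            * ((1 - (i:ℝ)/n) - (1 - (i:ℝ)/n) ^ α))
      ∧ (1/(2*(α-1))) * ∑ i ∈ Finset.Icc 1 (n-1),
          (((X (i+1)) ^ 2 - (X i) ^ 2)
            * ((1 - (i:ℝ)/n) - (1 - (i:ℝ)/n) ^ α))
        ≤ 1 / (2 * α ^ (α / (α - 1))) := by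
  have hα1 : (0:ℝ) < α - 1 := by linarith
  have hα0 : (0:ℝ) < α := by linarith
  have hαβ : (0:ℝ) < α ^ (α / (α - 1)) := Real.rpow_pos_of_pos hα0 _
  have hfac : ∀ i ∈ Finset.Icc 1 (n-1),
      0 ≤ (X (i+1)) ^ 2 - (X i) ^ 2 ∧ 0 ≤ 1 - (i:ℝ)/n ∧ (1 - (i:ℝ)/n) ≤ 1 := by
    intro i hi
    obtain ⟨hi1, hi2⟩ := Finset.mem_Icc.mp hi
    have hn2 : 2 ≤ n := by omega
    have hXi := hX i (Finset.mem_Icc.mpr ⟨hi1, by omega⟩)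
    have hXi1 := hX (i+1) (Finset.mem_Icc.mpr ⟨by omega, by omega⟩)
    have hle : X i ≤ X (i+1) := hmono i (i+1) hi1 (by omega) (by omega)
    refine ⟨by nlinarith [hXi.1, hXi.2, hXi1.1, hXi1.2], ?_, ?_⟩
    · have : (i:ℝ)/n ≤ 1 := by
        rw [div_le_one (by positivity)]
        exact_mod_cast by omega
      linarith
    · have : (0:ℝ) ≤ (i:ℝ)/n := by positivity
      linarith
  constructor
  · apply mul_nonneg (by positivity)
    apply Finset.sum_nonneg
    intro i hi
    obtain ⟨hd, ht0, ht1⟩ := hfac i hi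
    exact mul_nonneg hd (g_nonneg α hα _ ht0 ht1)
  · have hM0 : 0 ≤ (α - 1) / α ^ (α / (α - 1)) := by positivity
    have key2 : ∑ i ∈ Finset.Icc 1 (n-1),
        (((X (i+1)) ^ 2 - (X i) ^ 2) * ((1 - (i:ℝ)/n) - (1 - (i:ℝ)/n) ^ α))
        ≤ (α - 1) / α ^ (α / (α - 1)) := by
      by_cases hn : n ≤ 1
      · have he : Finset.Icc 1 (n-1) = ∅ := by
          apply Finset.Icc_eq_empty; omega
        rw [he]; simpa using hM0
      · push_neg at hn
        have hn1 : 1 ≤ n := by omega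
        calc ∑ i ∈ Finset.Icc 1 (n-1),
              (((X (i+1)) ^ 2 - (X i) ^ 2) * ((1 - (i:ℝ)/n) - (1 - (i:ℝ)/n) ^ α))
            ≤ ∑ i ∈ Finset.Icc 1 (n-1),
              (((X (i+1)) ^ 2 - (X i) ^ 2) * ((α - 1) / α ^ (α / (α - 1)))) := by
              apply Finset.sum_le_sum
              intro i hi
              obtain ⟨hd, ht0, ht1⟩ := hfac i hi
              exact mul_le_mul_of_nonneg_left (key_max α hα _ ht0) hd
          _ = (∑ i ∈ Finset.Icc 1 (n-1), ((X (i+1)) ^ 2 - (X i) ^ 2))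
                * ((α - 1) / α ^ (α / (α - 1))) := by rw [← Finset.sum_mul]
          _ = ((X n) ^ 2 - (X 1) ^ 2) * ((α - 1) / α ^ (α / (α - 1))) := by
              rw [telescope_sq (fun i => (X i) ^ 2) n hn1]
          _ ≤ 1 * ((α - 1) / α ^ (α / (α - 1))) := by
              apply mul_le_mul_of_nonneg_right _ hM0
              have hXn := hX n (Finset.mem_Icc.mpr ⟨hn1, le_refl n⟩)
              have hX1 := hX 1 (Finset.mem_Icc.mpr ⟨le_refl 1, hn1⟩)
              nlinarith [hXn.1, hXn.2, hX1.1, hX1.2]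
          _ = (α - 1) / α ^ (α / (α - 1)) := one_mul _
    have hpos : (0:ℝ) < 1/(2*(α-1)) := by positivity
    calc (1/(2*(α-1))) * ∑ i ∈ Finset.Icc 1 (n-1),
          (((X (i+1)) ^ 2 - (X i) ^ 2) * ((1 - (i:ℝ)/n) - (1 - (i:ℝ)/n) ^ α))
        ≤ (1/(2*(α-1))) * ((α - 1) / α ^ (α / (α - 1))) :=
          mul_le_mul_of_nonneg_left key2 hpos.le
      _ = 1 / (2 * α ^ (α / (α - 1))) := by
          field_simp
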